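/- Fix an integer k ≥ 2 and an alphabet Σ of k symbols. As i → ∞, T(i) − S(i) = O(k^{i/3}); more precisely, for every i ≥ 2, T(i) − S(i) ≤ Σ_{r=3}^{i} ((r−1)/2)·k^{i/r} where the exponent i/r is a real number, and this sum is O(k^{i/3}). -/

import Mathlib

open Asymptotics Filter

/-- T(i): the number of ordered triples (u,v,z) of nonempty words with uv = z, |z| = i
(the TUPLE convention). -/
noncomputable def T (k i : ℕ) : ℕ :=
  Set.ncard {t : List (Fin k) × List (Fin k) × List (Fin k) |
    t.1 ≠ [] ∧ t.2.1 ≠ [] ∧ t.1 ++ t.2.1 = t.2.2 ∧ t.2.2.length = i}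

/-- S(i): the number of such triples counted up to identifying (u,v,z) with (v,u,z)
whenever uv = vu = z (the SET convention). -/
noncomputable def S (k i : ℕ) : ℕ :=
  Set.ncard {s : Finset (List (Fin k)) | ∃ u v : List (Fin k),
    u ≠ [] ∧ v ≠ [] ∧ (u ++ v).length = i ∧ s = {u, v, u ++ v}}


variable {α : Type*}

/-- word power -/
def wpow (w : List α) : ℕ → List α
  | 0 => []
  | n+1 => w ++ wpow w n

lemma wpow_length (w : List α) (n : ℕ) : (wpow w n).length = n * w.length := by
  induction n with
  | zero => simp [wpow]
  | succ n ih => simp [wpow, ih]; ring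

lemma wpow_add (w : List α) (m n : ℕ) : wpow w (m+n) = wpow w m ++ wpow w n := by
  induction m with
  | zero => simp [wpow]
  | succ m ih => simp [wpow, Nat.succ_add, ih]

lemma eq_of_append_comm_length_eq {u v : List α} (h : u ++ v = v ++ u)
    (hl : u.length = v.length) : u = v := by
  have h1 : (u ++ v).take u.length = u := List.take_left
  have h2 : (v ++ u).take u.length = v := by rw [hl]; exact List.take_left
  rw [h, h2] at h1; exact h1.symm

lemma comm_words : ∀ u v : List α, u ++ v = v ++ u →
    ∃ (w : List α) (m n : ℕ), u = wpow w m ∧ v = wpow w n := by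
  have key : ∀ N, ∀ u v : List α, u.length + v.length ≤ N → u ++ v = v ++ u →
      ∃ (w : List α) (m n : ℕ), u = wpow w m ∧ v = wpow w n := by
    intro N
    induction N with
    | zero =>
      intro u v hN _
      have hu : u = [] := by
        have := Nat.le_zero.mp hN
        exact List.length_eq_zero_iff.mp (by omega)
      have hv : v = [] := List.length_eq_zero_iff.mp (by omega)
      exact ⟨[], 0, 0, by simp [hu, wpow], by simp [hv, wpow]⟩
    | succ N ih =>
      intro u v hN h
      rcases eq_or_ne u [] with hu | hu
      · exact ⟨v, 0, 1, by simp [hu, wpow], by simp [wpow]⟩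
      rcases eq_or_ne v [] with hv | hv
      · exact ⟨u, 1, 0, by simp [wpow], by simp [hv, wpow]⟩
      have main : ∀ u v : List α, u ≠ [] → u.length + v.length ≤ N + 1 →
          u.length ≤ v.length → u ++ v = v ++ u →
          ∃ (w : List α) (m n : ℕ), u = wpow w m ∧ v = wpow w n := by
        intro u v hu hN hle h -- u is a prefix of v
        have htake : u = v.take u.length := by
          have h1 : (u ++ v).take u.length = u := List.take_left
          have h2 : (v ++ u).take u.length = v.take u.length :=
            List.take_append_of_le_length hle
          rw [h, h2] at h1; exact h1.symm
        set t := v.drop u.length with ht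
        have hv' : v = u ++ t := by rw [htake, ht]; exact (List.take_append_drop _ _).symm
        have hcomm : u ++ t = t ++ u := by
          have : u ++ (u ++ t) = (u ++ t) ++ u := by rw [← hv']; exact h
          rw [List.append_assoc] at this
          exact List.append_cancel_left this
        have hlen : u.length + t.length ≤ N := by
          have htl : t.length = v.length - u.length := by rw [ht, List.length_drop]
          have h0 : 0 < u.length := List.length_pos_iff.mpr hu
          have h0' : u.length ≤ v.length := hle
          omega
        obtain ⟨w, m, n, h1, h2⟩ := ih u t hlen hcomm
        exact ⟨w, m, m + n, h1, by rw [hv', wpow_add, h1, h2]⟩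
      rcases le_or_gt u.length v.length with hle | hlt
      · exact main u v hu hN hle h
      · obtain ⟨w, m, n, h1, h2⟩ := main v u hv (by omega) (le_of_lt hlt) h.symm
        exact ⟨w, n, m, h2, h1⟩
  intro u v h
  exact key (u.length + v.length) u v le_rfl h

lemma wpow_nil (n : ℕ) : (wpow ([] : List α) n) = [] := by
  induction n with
  | zero => rfl
  | succ n ih => simp [wpow, ih]

lemma comm_struct {u v : List α} (hu : u ≠ []) (hv : v ≠ []) (h : u ++ v = v ++ u) :
    ∃ (w : List α), w ≠ [] ∧ (∃ m, u = wpow w m) ∧ (∃ n, v = wpow w n) := by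
  obtain ⟨w, m, n, h1, h2⟩ := comm_words u v h
  refine ⟨w, ?_, ⟨m, h1⟩, ⟨n, h2⟩⟩
  rintro rfl
  exact hu (h1.trans (wpow_nil m))

open Classical in
noncomputable def pick (u v : List α) : List α :=
  if h : ∃ (w : List α), w ≠ [] ∧ (∃ m, u = wpow w m) ∧ (∃ n, v = wpow w n)
  then h.choose else []

lemma pick_spec {u v : List α} (hu : u ≠ []) (hv : v ≠ []) (h : u ++ v = v ++ u) :
    pick u v ≠ [] ∧ (∃ m, u = wpow (pick u v) m) ∧ (∃ n, v = wpow (pick u v) n) := by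
  have hex := comm_struct hu hv h
  classical
  rw [pick, dif_pos hex]
  exact hex.choose_spec

def Wfin (k p : ℕ) : Finset (List (Fin k)) :=
  (Finset.univ : Finset (List.Vector (Fin k) p)).image (·.toList)

lemma card_Wfin (k p : ℕ) : (Wfin k p).card ≤ k ^ p := by
  refine le_trans Finset.card_image_le ?_
  simp [card_vector]

lemma mem_Wfin {k p : ℕ} {w : List (Fin k)} (h : w.length = p) : w ∈ Wfin k p :=
  Finset.mem_image.mpr ⟨⟨w, h⟩, Finset.mem_univ _, rfl⟩

def Aset (k i : ℕ) : Set (List (Fin k) × List (Fin k) × List (Fin k)) :=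
  {t | t.1 ≠ [] ∧ t.2.1 ≠ [] ∧ t.1 ++ t.2.1 = t.2.2 ∧ t.2.2.length = i}

def A2set (k i : ℕ) : Set (List (Fin k) × List (Fin k) × List (Fin k)) :=
  {t ∈ Aset k i | t.1 ++ t.2.1 = t.2.1 ++ t.1 ∧ t.1.length < t.2.1.length}

lemma Aset_finite (k i : ℕ) : (Aset k i).Finite := by
  apply Set.Finite.subset
    (((List.finite_length_le (Fin k) i).prod
      ((List.finite_length_le (Fin k) i).prod (List.finite_length_eq (Fin k) i))))
  rintro ⟨u, v, z⟩ ⟨hu, hv, hz, hl⟩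
  have : u.length + v.length = i := by rw [← List.length_append, hz, hl]
  exact ⟨by simp; omega, by simp; omega, hl⟩

def fm {k : Type*} [DecidableEq k] (t : List k × List k × List k) : Finset (List k) :=
  {t.1, t.2.1, t.2.2}

lemma S_eq_image (k i : ℕ) :
    {s : Finset (List (Fin k)) | ∃ u v : List (Fin k),
      u ≠ [] ∧ v ≠ [] ∧ (u ++ v).length = i ∧ s = {u, v, u ++ v}} = fm '' (Aset k i) := by
  ext s
  constructor
  · rintro ⟨u, v, hu, hv, hl, rfl⟩
    exact ⟨(u, v, u ++ v), ⟨hu, hv, rfl, hl⟩, rfl⟩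
  · rintro ⟨⟨u, v, z⟩, ⟨hu, hv, hz, hl⟩, rfl⟩
    exact ⟨u, v, hu, hv, by rw [hz]; exact hl, by simp only [fm]; rw [show u ++ v = z from hz]⟩

lemma fm_injOn (k i : ℕ) : Set.InjOn fm (Aset k i \ A2set k i) := by
  rintro ⟨u, v, z⟩ ⟨⟨hu, hv, hz, hl⟩, ht2⟩ ⟨u', v', z'⟩ ⟨⟨hu', hv', hz', hl'⟩, ht2'⟩ hf
  simp only [fm] at hf
  dsimp only at hu hv hz hl hu' hv' hz' hl' ht2 ht2'
  -- basic length facts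
  have hlu : u.length + v.length = i := by rw [← List.length_append, hz, hl]
  have hlu' : u'.length + v'.length = i := by rw [← List.length_append, hz', hl']
  have hu0 : 0 < u.length := List.length_pos_iff.mpr hu
  have hv0 : 0 < v.length := List.length_pos_iff.mpr hv
  have hu0' : 0 < u'.length := List.length_pos_iff.mpr hu'
  have hv0' : 0 < v'.length := List.length_pos_iff.mpr hv'
  -- z = z'
  have hzz : z = z' := by
    have hzmem : z ∈ ({u', v', z'} : Finset (List (Fin k))) := by
      rw [← hf]; simp
    simp only [Finset.mem_insert, Finset.mem_singleton] at hzmem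
    rcases hzmem with h | h | h
    · exfalso; have := congrArg List.length h; omega
    · exfalso; have := congrArg List.length h; omega
    · exact h
  subst hzz
  -- u ∈ {u', v'}
  have humem : u ∈ ({u', v', z} : Finset (List (Fin k))) := by rw [← hf]; simp
  simp only [Finset.mem_insert, Finset.mem_singleton] at humem
  have case_eq : u = u' → (u, v, z) = (u', v', z) := by
    rintro rfl
    have : v = v' := List.append_cancel_left (hz.trans hz'.symm)
    rw [this]
  rcases humem with h | h | h
  · exact case_eq h
  · -- u = v'
    have humem' : u' ∈ ({u, v, z} : Finset (List (Fin k))) := by rw [hf]; simp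
    simp only [Finset.mem_insert, Finset.mem_singleton] at humem'
    rcases humem' with h' | h' | h'
    · exact (case_eq h'.symm)
    · -- u = v', u' = v : so z = u ++ v = v ++ u
      have hz'' : v ++ u = z := by rw [← h', h]; exact hz'
      have hcomm : u ++ v = v ++ u := hz.trans hz''.symm
      rcases eq_or_ne u v with hequv | huv
      · exact case_eq (by rw [hequv, ← h'])
      · have hlen : u.length ≠ v.length := fun hle => huv (eq_of_append_comm_length_eq hcomm hle)
        rcases lt_or_gt_of_ne hlen with hlt | hgt
        · exact absurd ⟨⟨hu, hv, hz, hl⟩, hcomm, hlt⟩ ht2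
        · refine absurd ⟨⟨hu', hv', hz', hl'⟩, ?_, ?_⟩ ht2'
          · rw [h', ← h]; exact hcomm.symm
          · rw [h', ← h]; exact hgt
    · exfalso; have := congrArg List.length h'; omega
  · exfalso; have := congrArg List.length h; omega

lemma T_le (k i : ℕ) : T k i ≤
    Set.ncard (fm '' (Aset k i)) + (A2set k i).ncard := by
  have hfin := Aset_finite k i
  have hsub : A2set k i ⊆ Aset k i := fun t ht => ht.1
  have hsplit : Aset k i ⊆ (Aset k i \ A2set k i) ∪ A2set k i := by
    intro t ht
    by_cases h : t ∈ A2set k i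
    · exact Or.inr h
    · exact Or.inl ⟨ht, h⟩
  calc T k i = (Aset k i).ncard := rfl
    _ ≤ ((Aset k i \ A2set k i) ∪ A2set k i).ncard :=
        Set.ncard_le_ncard hsplit ((hfin.diff).union (hfin.subset hsub))
    _ ≤ (Aset k i \ A2set k i).ncard + (A2set k i).ncard := Set.ncard_union_le _ _
    _ ≤ Set.ncard (fm '' (Aset k i)) + (A2set k i).ncard := by
        gcongr
        rw [← Set.ncard_image_of_injOn (fm_injOn k i)]
        exact Set.ncard_le_ncard (Set.image_mono Set.diff_subset)
          (hfin.image _)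

lemma A2_facts {k i : ℕ} {t : List (Fin k) × List (Fin k) × List (Fin k)}
    (ht : t ∈ A2set k i) :
    ∃ m n : ℕ, pick t.1 t.2.1 ≠ [] ∧ t.1 = wpow (pick t.1 t.2.1) m ∧
      t.2.1 = wpow (pick t.1 t.2.1) n ∧ 1 ≤ m ∧ m < n ∧
      i = (m + n) * (pick t.1 t.2.1).length ∧ t.2.2 = wpow (pick t.1 t.2.1) (m + n) := by
  obtain ⟨⟨hu, hv, hz, hl⟩, hcomm, hlt⟩ := ht
  obtain ⟨hw, ⟨m, hm⟩, ⟨n, hn⟩⟩ := pick_spec hu hv hcomm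
  set w := pick t.1 t.2.1 with hwdef
  have hw0 : 0 < w.length := List.length_pos_iff.mpr hw
  have hm1 : 1 ≤ m := by
    rcases Nat.eq_zero_or_pos m with rfl | h
    · exact absurd hm.symm (by simpa [wpow] using hu)
    · exact h
  have hmn : m < n := by
    have h1 : t.1.length = m * w.length := by rw [hm, wpow_length]
    have h2 : t.2.1.length = n * w.length := by rw [hn, wpow_length]
    rw [h1, h2] at hlt
    exact Nat.lt_of_mul_lt_mul_right hlt
  have hzz : t.2.2 = wpow w (m + n) := by rw [← hz, hm, hn, wpow_add]
  have hi : i = (m + n) * w.length := by rw [← hl, hzz, wpow_length]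
  exact ⟨m, n, hw, hm, hn, hm1, hmn, hi, hzz⟩

lemma A2_card (k i : ℕ) (hk : 1 ≤ k) :
    ((A2set k i).ncard : ℝ) ≤
      ∑ r ∈ Finset.Icc 3 i, ((r : ℝ) - 1) / 2 * (k : ℝ) ^ ((i : ℝ) / (r : ℝ)) := by
  classical
  set B : Finset (List (Fin k) × ℕ) := (Finset.Icc 3 i).biUnion
    (fun r => (Wfin k (i / r)) ×ˢ ((Finset.Icc 1 ((r - 1) / 2)).image (fun j => j * (i / r))))
    with hB
  set φ : (List (Fin k) × List (Fin k) × List (Fin k)) → List (Fin k) × ℕ :=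
    fun t => (pick t.1 t.2.1, t.1.length) with hφ
  have hmaps : ∀ t ∈ A2set k i, φ t ∈ (B : Set (List (Fin k) × ℕ)) := by
    intro t ht
    obtain ⟨m, n, hw, hm, hn, hm1, hmn, hi, hzz⟩ := A2_facts ht
    set w := pick t.1 t.2.1
    have hw0 : 0 < w.length := List.length_pos_iff.mpr hw
    have hr0 : 0 < m + n := by omega
    have hdiv : i / (m + n) = w.length := by rw [hi, Nat.mul_div_cancel_left _ hr0]
    rw [Finset.mem_coe, hB, Finset.mem_biUnion]
    refine ⟨m + n, ?_, ?_⟩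
    · rw [Finset.mem_Icc]
      constructor
      · omega
      · calc m + n = (m + n) * 1 := (Nat.mul_one _).symm
          _ ≤ (m + n) * w.length := Nat.mul_le_mul_left _ hw0
          _ = i := hi.symm
    · rw [Finset.mem_product]
      constructor
      · exact mem_Wfin (by rw [hdiv])
      · rw [Finset.mem_image]
        refine ⟨m, ?_, ?_⟩
        · rw [Finset.mem_Icc]
          refine ⟨hm1, ?_⟩
          rw [Nat.le_div_iff_mul_le (by norm_num)]
          omega
        · rw [hdiv, hφ]
          simp only
          rw [hm, wpow_length]
  have hinj : Set.InjOn φ (A2set k i) := by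
    intro t ht t' ht' heq
    obtain ⟨m, n, hw, hm, hn, hm1, hmn, hi, hzz⟩ := A2_facts ht
    obtain ⟨m', n', hw', hm', hn', hm1', hmn', hi', hzz'⟩ := A2_facts ht'
    have hweq : pick t.1 t.2.1 = pick t'.1 t'.2.1 := congrArg Prod.fst heq
    have haeq : t.1.length = t'.1.length := congrArg Prod.snd heq
    set w := pick t.1 t.2.1 with hwd
    have hw0 : 0 < w.length := List.length_pos_iff.mpr hw
    have hrr : m + n = i / w.length := by
      rw [hi, Nat.mul_div_cancel _ hw0]
    have hrr' : m' + n' = i / w.length := by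
      rw [hi', ← hweq, Nat.mul_div_cancel _ hw0]
    have hz2 : t.2.2 = t'.2.2 := by
      rw [hzz, hzz', ← hweq, hrr, hrr']
    have hz : t.1 ++ t.2.1 = t.2.2 := ht.1.2.2.1
    have hz' : t'.1 ++ t'.2.1 = t'.2.2 := ht'.1.2.2.1
    have hu : t.1 = t'.1 := by
      have e1 : t.1 = (t.2.2).take t.1.length := by rw [← hz, List.take_left]
      have e2 : t'.1 = (t'.2.2).take t'.1.length := by rw [← hz', List.take_left]
      rw [e1, e2, hz2, haeq]
    have hv : t.2.1 = t'.2.1 := by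
      have : t.1 ++ t.2.1 = t.1 ++ t'.2.1 := by rw [hz, hz2, ← hz', hu]
      exact List.append_cancel_left this
    exact Prod.ext hu (Prod.ext hv hz2)
  have hcard : (A2set k i).ncard ≤ B.card := by
    rw [← Set.ncard_coe_finset]
    exact Set.ncard_le_ncard_of_injOn φ hmaps hinj (B.finite_toSet)
  calc ((A2set k i).ncard : ℝ) ≤ (B.card : ℝ) := by exact_mod_cast hcard
    _ ≤ ∑ r ∈ Finset.Icc 3 i, ((k ^ (i / r) * ((r - 1) / 2) : ℕ) : ℝ) := by
        rw [← Nat.cast_sum]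
        have : B.card ≤ ∑ r ∈ Finset.Icc 3 i, k ^ (i / r) * ((r - 1) / 2) := by
          refine le_trans (Finset.card_biUnion_le) (Finset.sum_le_sum ?_)
          intro r _
          rw [Finset.card_product]
          refine Nat.mul_le_mul (card_Wfin k (i / r)) ?_
          refine le_trans Finset.card_image_le ?_
          rw [Nat.card_Icc]
          omega
        exact_mod_cast this
    _ ≤ _ := by
        refine Finset.sum_le_sum ?_
        intro r hr
        rw [Finset.mem_Icc] at hr
        have hr3 : 3 ≤ r := hr.1
        push_cast
        rw [mul_comm]
        have h1 : ((k : ℝ)) ^ (i / r : ℕ) ≤ (k : ℝ) ^ ((i : ℝ) / (r : ℝ)) := by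
          rw [← Real.rpow_natCast (k : ℝ) (i / r)]
          refine Real.rpow_le_rpow_of_exponent_le (by exact_mod_cast hk) ?_
          exact Nat.cast_div_le
        have h2 : (((r - 1) / 2 : ℕ) : ℝ) ≤ ((r : ℝ) - 1) / 2 := by
          refine le_trans Nat.cast_div_le ?_
          rw [Nat.cast_sub (by omega : 1 ≤ r), Nat.cast_one, Nat.cast_ofNat]
        have hb : (0:ℝ) ≤ ((r : ℝ) - 1) / 2 := by
          have : (3:ℝ) ≤ (r:ℝ) := by exact_mod_cast hr3
          linarith
        exact mul_le_mul h2 h1 (by positivity) hb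

lemma S_eq (k i : ℕ) : S k i = (fm '' (Aset k i)).ncard := by
  rw [S, S_eq_image]

lemma S_le_T (k i : ℕ) : S k i ≤ T k i := by
  rw [S_eq]
  exact Set.ncard_image_le (Aset_finite k i)

lemma main_ineq (k i : ℕ) (hk : 1 ≤ k) :
    (T k i : ℝ) - (S k i : ℝ) ≤
      ∑ r ∈ Finset.Icc 3 i, ((r : ℝ) - 1) / 2 * (k : ℝ) ^ ((i : ℝ) / (r : ℝ)) := by
  have h1 : T k i ≤ S k i + (A2set k i).ncard := by
    have := T_le k i
    rw [← S_eq] at this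
    exact this
  have h2 := A2_card k i hk
  have h1' : (T k i : ℝ) ≤ (S k i : ℝ) + ((A2set k i).ncard : ℝ) := by
    exact_mod_cast h1
  linarith

lemma sum_bound (k : ℕ) (hk : 1 ≤ k) {i : ℕ} (hi : 3 ≤ i) :
    ∑ r ∈ Finset.Icc 3 i, ((r : ℝ) - 1) / 2 * (k : ℝ) ^ ((i : ℝ) / (r : ℝ)) ≤
      (k : ℝ) ^ ((i : ℝ) / 3) + (i : ℝ) ^ 2 * (k : ℝ) ^ ((i : ℝ) / 4) := by
  have hk1 : (1 : ℝ) ≤ (k : ℝ) := by exact_mod_cast hk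
  have h3 : (3 : ℕ) ∈ Finset.Icc 3 i := by rw [Finset.mem_Icc]; omega
  rw [← Finset.add_sum_erase _ _ h3]
  have herase : (Finset.Icc 3 i).erase 3 = Finset.Icc 4 i := by
    rw [Finset.Icc_erase_left, ← Finset.Icc_add_one_left_eq_Ioc]; rfl
  rw [herase]
  have hterm : ((3 : ℝ) - 1) / 2 * (k : ℝ) ^ ((i : ℝ) / (3 : ℝ)) =
      (k : ℝ) ^ ((i : ℝ) / 3) := by norm_num
  push_cast
  rw [hterm]
  gcongr ?_ + ?_
  · exact le_rfl
  · calc ∑ r ∈ Finset.Icc 4 i, ((r : ℝ) - 1) / 2 * (k : ℝ) ^ ((i : ℝ) / (r : ℝ))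
        ≤ ∑ r ∈ Finset.Icc 4 i, (i : ℝ) * (k : ℝ) ^ ((i : ℝ) / 4) := by
          refine Finset.sum_le_sum ?_
          intro r hr
          rw [Finset.mem_Icc] at hr
          have hri : (r : ℝ) ≤ (i : ℝ) := by exact_mod_cast hr.2
          have hr4 : (4 : ℝ) ≤ (r : ℝ) := by exact_mod_cast hr.1
          have hexp : (i : ℝ) / (r : ℝ) ≤ (i : ℝ) / 4 := by
            apply div_le_div_of_nonneg_left (by positivity) (by norm_num) hr4
          refine mul_le_mul (by linarith) (Real.rpow_le_rpow_of_exponent_le hk1 hexp)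
            (by positivity) (by positivity)
      _ ≤ (i : ℝ) ^ 2 * (k : ℝ) ^ ((i : ℝ) / 4) := by
          rw [Finset.sum_const, Nat.card_Icc]
          have : ((i + 1 - 4 : ℕ) : ℝ) ≤ (i : ℝ) := by
            have : i + 1 - 4 ≤ i := by omega
            exact_mod_cast this
          rw [nsmul_eq_mul]
          calc ((i + 1 - 4 : ℕ) : ℝ) * ((i : ℝ) * (k : ℝ) ^ ((i : ℝ) / 4))
              ≤ (i : ℝ) * ((i : ℝ) * (k : ℝ) ^ ((i : ℝ) / 4)) := by
                refine mul_le_mul_of_nonneg_right this (by positivity)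
            _ = (i : ℝ) ^ 2 * (k : ℝ) ^ ((i : ℝ) / 4) := by ring

lemma sum_nonneg' (k i : ℕ) :
    0 ≤ ∑ r ∈ Finset.Icc 3 i, ((r : ℝ) - 1) / 2 * (k : ℝ) ^ ((i : ℝ) / (r : ℝ)) := by
  refine Finset.sum_nonneg ?_
  intro r hr
  rw [Finset.mem_Icc] at hr
  have : (3 : ℝ) ≤ (r : ℝ) := by exact_mod_cast hr.1
  have h1 : (0:ℝ) ≤ ((r : ℝ) - 1) / 2 := by linarith
  positivity

lemma sum_isBigO (k : ℕ) (hk : 2 ≤ k) :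
    (fun i : ℕ => ∑ r ∈ Finset.Icc 3 i, ((r : ℝ) - 1) / 2 * (k : ℝ) ^ ((i : ℝ) / (r : ℝ)))
      =O[atTop] (fun i : ℕ => (k : ℝ) ^ ((i : ℝ) / 3)) := by
  have hk1 : (1 : ℝ) < (k : ℝ) := by exact_mod_cast hk
  have hkpos : (0 : ℝ) < (k : ℝ) := by linarith
  have hbase : 1 < (k : ℝ) ^ ((1 : ℝ) / 12) :=
    (Real.one_lt_rpow_iff_of_pos hkpos).mpr (Or.inl ⟨hk1, by norm_num⟩)
  have hlo := (isLittleO_pow_const_const_pow_of_one_lt (R := ℝ) 2 hbase).isBigO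
  have hx : ∀ i : ℕ, ((k : ℝ) ^ ((1 : ℝ) / 12)) ^ i = (k : ℝ) ^ ((i : ℝ) / 12) := by
    intro i
    rw [← Real.rpow_natCast ((k : ℝ) ^ ((1 : ℝ) / 12)) i,
      ← Real.rpow_mul (le_of_lt hkpos)]
    ring_nf
  have hC : (fun i : ℕ => (i : ℝ) ^ 2 * (k : ℝ) ^ ((i : ℝ) / 4)) =O[atTop]
      (fun i : ℕ => (k : ℝ) ^ ((i : ℝ) / 3)) := by
    have hmul := hlo.mul (isBigO_refl (fun i : ℕ => (k : ℝ) ^ ((i : ℝ) / 4)) atTop)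
    refine hmul.congr (fun x => rfl) (fun x => ?_)
    rw [hx x, ← Real.rpow_add hkpos]
    congr 1
    ring
  have hsum : (fun i : ℕ => ∑ r ∈ Finset.Icc 3 i,
        ((r : ℝ) - 1) / 2 * (k : ℝ) ^ ((i : ℝ) / (r : ℝ)))
      =O[atTop] (fun i : ℕ => (k : ℝ) ^ ((i : ℝ) / 3) + (i : ℝ) ^ 2 * (k : ℝ) ^ ((i : ℝ) / 4)) := by
    refine IsBigO.of_bound 1 ?_
    filter_upwards [eventually_ge_atTop 3] with i hi
    have hb := sum_bound k (by omega) hi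
    have hnn := sum_nonneg' k i
    have hbnn : (0 : ℝ) ≤ (k : ℝ) ^ ((i : ℝ) / 3) + (i : ℝ) ^ 2 * (k : ℝ) ^ ((i : ℝ) / 4) := by
      positivity
    rw [Real.norm_eq_abs, Real.norm_eq_abs, abs_of_nonneg hnn, abs_of_nonneg hbnn, one_mul]
    exact hb
  exact hsum.trans ((isBigO_refl (fun i : ℕ => (k : ℝ) ^ ((i : ℝ) / 3)) atTop).add hC)


/-- T(i) − S(i) = O(k^{i/3}); more precisely, for every i ≥ 2,
T(i) − S(i) ≤ Σ_{r=3}^{i} ((r−1)/2)·k^{i/r} (real exponent), and this sum is O(k^{i/3}). -/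
theorem stmt_11 (k : ℕ) (hk : 2 ≤ k) :
    (fun i : ℕ => (T k i : ℝ) - (S k i : ℝ)) =O[atTop]
      (fun i : ℕ => (k : ℝ) ^ ((i : ℝ) / 3)) ∧
    (∀ i : ℕ, 2 ≤ i →
      (T k i : ℝ) - (S k i : ℝ) ≤
        ∑ r ∈ Finset.Icc 3 i, ((r : ℝ) - 1) / 2 * (k : ℝ) ^ ((i : ℝ) / (r : ℝ))) ∧
    (fun i : ℕ => ∑ r ∈ Finset.Icc 3 i, ((r : ℝ) - 1) / 2 * (k : ℝ) ^ ((i : ℝ) / (r : ℝ)))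
      =O[atTop] (fun i : ℕ => (k : ℝ) ^ ((i : ℝ) / 3)) := by
  have hk1 : 1 ≤ k := by omega
  refine ⟨?_, fun i _ => main_ineq k i hk1, sum_isBigO k hk⟩
  have h1 : (fun i : ℕ => (T k i : ℝ) - (S k i : ℝ)) =O[atTop]
      (fun i : ℕ => ∑ r ∈ Finset.Icc 3 i,
        ((r : ℝ) - 1) / 2 * (k : ℝ) ^ ((i : ℝ) / (r : ℝ))) := by
    refine IsBigO.of_bound 1 ?_
    filter_upwards [eventually_ge_atTop 2] with i hi
    have hle := main_ineq k i hk1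
    have hst : (S k i : ℝ) ≤ (T k i : ℝ) := by exact_mod_cast S_le_T k i
    have hnn := sum_nonneg' k i
    rw [Real.norm_eq_abs, Real.norm_eq_abs, abs_of_nonneg (by linarith),
      abs_of_nonneg hnn, one_mul]
    exact hle
  exact h1.trans (sum_isBigO k hk)
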